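/- Let S ⊂ ℝ³ (with Minkowski form Q(v) = v₁² + v₂² − v₃²) be a pseudo-spacelike entire graph over the plane {x₃ = 0}, i.e., S = {(x, f(x)) : x ∈ ℝ²} for some function f, and for every x ∈ S, every other point of S lies in the exterior of the light cone of x (Q(p − x) > 0 for all p ∈ S, p ≠ x). Then for every timelike future-pointing vector v (Q(v) < 0, v₃ > 0), S is also a graph over the plane orthogonal to v: every line of direction v meets S in exactly one point. -/

import Mathlib

/-- Minkowski quadratic form on ℝ³. -/
noncomputable def QL (p : ℝ × ℝ × ℝ) : ℝ := p.1 ^ 2 + p.2.1 ^ 2 - p.2.2 ^ 2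

set_option maxHeartbeats 1600000 in
/-- A pseudo-spacelike entire graph `S` over the plane `{x₃ = 0}`
is a graph over the plane orthogonal to any future-pointing timelike vector `v`:
every line with direction `v` meets `S` in exactly one point. -/
theorem pseudoSpacelike_graph_over_any_spacelike_plane (f : ℝ × ℝ → ℝ)
    (S : Set (ℝ × ℝ × ℝ)) (hS : S = {p | p.2.2 = f (p.1, p.2.1)})
    (hps : ∀ p ∈ S, ∀ q ∈ S, p ≠ q → 0 < QL (p - q))
    (v : ℝ × ℝ × ℝ) (hv : QL v < 0) (hv3 : 0 < v.2.2) :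
    ∀ z : ℝ × ℝ × ℝ, ∃! s : ℝ, z + s • v ∈ S := by
  intro z
  -- squared Lipschitz bound
  have hsq : ∀ x y : ℝ × ℝ, (f x - f y) ^ 2 ≤ (x.1 - y.1) ^ 2 + (x.2 - y.2) ^ 2 := by
    intro x y
    by_cases hxy : x = y
    · simp [hxy]
    · have hp : ((x.1, x.2, f x) : ℝ × ℝ × ℝ) ∈ S := by simp [hS]
      have hq : ((y.1, y.2, f y) : ℝ × ℝ × ℝ) ∈ S := by simp [hS]
      have hne : ((x.1, x.2, f x) : ℝ × ℝ × ℝ) ≠ (y.1, y.2, f y) := by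
        intro h
        apply hxy
        have h1 := congrArg Prod.fst h
        have h2 := congrArg (fun p : ℝ × ℝ × ℝ => p.2.1) h
        exact Prod.ext h1 h2
      have := hps _ hp _ hq hne
      simp only [QL, Prod.fst_sub, Prod.snd_sub] at this
      nlinarith [this]
  have hLip : ∀ x y : ℝ × ℝ, |f x - f y| ≤ Real.sqrt ((x.1 - y.1) ^ 2 + (x.2 - y.2) ^ 2) := by
    intro x y
    rw [← Real.sqrt_sq_eq_abs]
    exact Real.sqrt_le_sqrt (hsq x y)
  set c : ℝ := Real.sqrt (v.1 ^ 2 + v.2.1 ^ 2) with hc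
  have hc0 : 0 ≤ c := Real.sqrt_nonneg _
  have hcv : c < v.2.2 := by
    have h2 : c ^ 2 < v.2.2 ^ 2 := by
      rw [hc, Real.sq_sqrt (by positivity)]
      simp only [QL] at hv; linarith
    nlinarith
  -- continuity of f
  have hfc : Continuous f := by
    have hL : LipschitzWith 2 f := by
      rw [lipschitzWith_iff_dist_le_mul]
      intro x y
      have h1 := hLip x y
      have h2 : Real.sqrt ((x.1 - y.1) ^ 2 + (x.2 - y.2) ^ 2)
          ≤ |x.1 - y.1| + |x.2 - y.2| := by
        rw [show |x.1 - y.1| + |x.2 - y.2|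
            = Real.sqrt ((|x.1 - y.1| + |x.2 - y.2|) ^ 2) from
          (Real.sqrt_sq (by positivity)).symm]
        apply Real.sqrt_le_sqrt
        nlinarith [abs_nonneg (x.1 - y.1), abs_nonneg (x.2 - y.2),
          sq_abs (x.1 - y.1), sq_abs (x.2 - y.2)]
      have h3 : |x.1 - y.1| ≤ dist x y := by
        rw [Prod.dist_eq]; exact le_max_of_le_left (by rw [Real.dist_eq])
      have h4 : |x.2 - y.2| ≤ dist x y := by
        rw [Prod.dist_eq]; exact le_max_of_le_right (by rw [Real.dist_eq])
      rw [Real.dist_eq]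
      push_cast
      linarith
    exact hL.continuous
  -- membership characterization
  have hmemiff : ∀ s : ℝ, (z + s • v ∈ S) ↔
      z.2.2 + s * v.2.2 - f (z.1 + s * v.1, z.2.1 + s * v.2.1) = 0 := by
    intro s
    rw [hS]
    simp only [Set.mem_setOf_eq, Prod.fst_add, Prod.snd_add, Prod.smul_fst, Prod.smul_snd,
      smul_eq_mul]
    constructor <;> intro h <;> linarith [h]
  set g : ℝ → ℝ := fun s => z.2.2 + s * v.2.2 - f (z.1 + s * v.1, z.2.1 + s * v.2.1) with hg
  have hgc : Continuous g := by
    apply Continuous.sub (by continuity)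
    exact hfc.comp (by continuity)
  -- bound: |f (z+sv) - f z| ≤ |s| * c
  have hbound : ∀ s : ℝ, |f (z.1 + s * v.1, z.2.1 + s * v.2.1) - f (z.1, z.2.1)| ≤ |s| * c := by
    intro s
    have := hLip (z.1 + s * v.1, z.2.1 + s * v.2.1) (z.1, z.2.1)
    simp only at this
    calc |f (z.1 + s * v.1, z.2.1 + s * v.2.1) - f (z.1, z.2.1)|
        ≤ Real.sqrt ((z.1 + s * v.1 - z.1) ^ 2 + (z.2.1 + s * v.2.1 - z.2.1) ^ 2) := this
      _ = |s| * c := by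
          rw [show (z.1 + s * v.1 - z.1) ^ 2 + (z.2.1 + s * v.2.1 - z.2.1) ^ 2
              = s ^ 2 * (v.1 ^ 2 + v.2.1 ^ 2) by ring,
            Real.sqrt_mul (by positivity), Real.sqrt_sq_eq_abs, hc]
  set K : ℝ := |z.2.2 - f (z.1, z.2.1)| with hK
  have hK0 : 0 ≤ K := abs_nonneg _
  set d : ℝ := v.2.2 - c with hd
  have hd0 : 0 < d := by simp [hd]; linarith
  set T : ℝ := (K + 1) / d with hT
  have hT0 : 0 < T := by positivity
  have hgpos : 0 < g T := by
    have hb := hbound T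
    have h1 : f (z.1 + T * v.1, z.2.1 + T * v.2.1) ≤ f (z.1, z.2.1) + T * c := by
      rw [abs_le] at hb
      have := hb.2
      rw [abs_of_pos hT0] at this
      linarith
    have h2 : f (z.1, z.2.1) ≤ z.2.2 + K := by
      have := abs_le.mp (le_refl K) |>.2
      rw [hK] at *
      have := neg_abs_le (z.2.2 - f (z.1, z.2.1))
      linarith
    have hTd : T * d = K + 1 := by rw [hT]; exact div_mul_cancel₀ _ (ne_of_gt hd0)
    simp only [hg]
    have : T * v.2.2 = T * c + (K + 1) := by rw [← hTd]; ring
    nlinarith [this]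
  have hgneg : g (-T) < 0 := by
    have hb := hbound (-T)
    have h1 : f (z.1, z.2.1) - T * c ≤ f (z.1 + (-T) * v.1, z.2.1 + (-T) * v.2.1) := by
      rw [abs_le] at hb
      have := hb.1
      rw [abs_neg, abs_of_pos hT0] at this
      linarith
    have h2 : z.2.2 - K ≤ f (z.1, z.2.1) := by
      have := le_abs_self (z.2.2 - f (z.1, z.2.1))
      rw [← hK] at this
      linarith
    have hTd : T * d = K + 1 := by rw [hT]; exact div_mul_cancel₀ _ (ne_of_gt hd0)
    simp only [hg]
    have : T * v.2.2 = T * c + (K + 1) := by rw [← hTd]; ring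
    nlinarith [this]
  -- existence via IVT
  obtain ⟨s₀, hs₀mem, hs₀⟩ := intermediate_value_Icc (by linarith : -T ≤ T)
    (hgc.continuousOn) (show (0:ℝ) ∈ Set.Icc (g (-T)) (g T) from ⟨le_of_lt hgneg, le_of_lt hgpos⟩)
  refine ⟨s₀, (hmemiff s₀).mpr hs₀, ?_⟩
  intro t ht
  by_contra hts
  have hp : z + t • v ∈ S := ht
  have hq : z + s₀ • v ∈ S := (hmemiff s₀).mpr hs₀
  have hne : z + t • v ≠ z + s₀ • v := by
    intro h
    apply hts
    have h3 := congrArg (fun p : ℝ × ℝ × ℝ => p.2.2) h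
    simp only [Prod.snd_add, Prod.smul_snd, smul_eq_mul] at h3
    have : t * v.2.2 = s₀ * v.2.2 := by linarith
    exact mul_right_cancel₀ (ne_of_gt hv3) this
  have := hps _ hp _ hq hne
  have hsub : (z + t • v) - (z + s₀ • v) = (t - s₀) • v := by
    ext <;> simp <;> ring
  rw [hsub] at this
  simp only [QL, Prod.smul_fst, Prod.smul_snd, smul_eq_mul] at this
  simp only [QL] at hv
  have hts' : t - s₀ ≠ 0 := sub_ne_zero.mpr fun h => hts h
  have hpos : 0 < (t - s₀) ^ 2 := by positivity
  nlinarith [hpos, this, hv]
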